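/- Let N be an odd prime, let q be a prime power with gcd(q, N) = 1, and let 1 ≤ r ≤ N. The rN × N² matrix V over F_q whose (i, j) block (i ∈ [r], j ∈ [N]) is the circulant permutation matrix P_N^{(i−1)(j−1) mod N} has rank Nr − r + 1 over F_q. -/

import Mathlib

/-- The `N × N` circulant permutation matrix `P_N ^ k` over `F`: its `(a, b)` entry is
`1` exactly when `b ≡ a + k (mod N)`. -/
def cpm (F : Type*) [Zero F] [One F] (N k : ℕ) : Matrix (Fin N) (Fin N) F :=
  Matrix.of fun a b => if ((b : ℕ) : ZMod N) = ((a : ℕ) : ZMod N) + (k : ZMod N) then 1 else 0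

open Finset

section Aux

/-- The canonical equivalence `Fin N ≃ ZMod N`. -/
def finZmodEquiv (N : ℕ) [NeZero N] : Fin N ≃ ZMod N where
  toFun a := ((a : ℕ) : ZMod N)
  invFun z := ⟨z.val, ZMod.val_lt z⟩
  left_inv a := by
    ext
    simp [ZMod.val_natCast_of_lt a.isLt]
  right_inv z := ZMod.natCast_rightInverse z

variable {K : Type*} [Field K] {N : ℕ} [NeZero N] {ζ : K}

/-- The additive character `t ↦ ζ ^ t.val`. -/
def E (ζ : K) (t : ZMod N) : K := ζ ^ t.val

lemma E_zero : E ζ (0 : ZMod N) = 1 := by simp [E]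

lemma pow_mod_eq (h1 : ζ ^ N = 1) (m : ℕ) : ζ ^ (m % N) = ζ ^ m := by
  conv_rhs => rw [← Nat.div_add_mod m N]
  rw [pow_add, pow_mul, h1, one_pow, one_mul]

lemma E_add (h1 : ζ ^ N = 1) (a b : ZMod N) : E ζ (a + b) = E ζ a * E ζ b := by
  unfold E
  rw [ZMod.val_add, pow_mod_eq h1, pow_add]

lemma E_sum (hζ : IsPrimitiveRoot ζ N) (c : ZMod N) :
    ∑ x : ZMod N, E ζ (c * x) = if c = 0 then ((N : ℕ) : K) else 0 := by
  rcases eq_or_ne c 0 with rfl | hc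
  · simp only [if_pos rfl, zero_mul, E_zero]
    simp [ZMod.card]
  · rw [if_neg hc]
    have h1 : ζ ^ N = 1 := hζ.pow_eq_one
    set S := ∑ x : ZMod N, E ζ (c * x) with hS
    have hkey : E ζ c * S = S := by
      rw [hS, Finset.mul_sum]
      calc ∑ x : ZMod N, E ζ c * E ζ (c * x)
          = ∑ x : ZMod N, E ζ (c * (x + 1)) := by
            refine Finset.sum_congr rfl fun x _ => ?_
            rw [mul_add, mul_one, E_add h1, mul_comm]
        _ = ∑ x : ZMod N, E ζ (c * x) :=
            Fintype.sum_equiv (Equiv.addRight 1) _ _ (fun x => rfl)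
    have hne : E ζ c ≠ 1 :=
      hζ.pow_ne_one_of_pos_of_lt (ZMod.val_pos.2 hc).ne' (ZMod.val_lt c)
    have : (E ζ c - 1) * S = 0 := by rw [sub_mul, one_mul, hkey, sub_self]
    rcases mul_eq_zero.1 this with h | h
    · exact absurd (sub_eq_zero.1 h) hne
    · exact h

/-- The key lemma: if the sums of `g i` along all lines of slopes `0, …, r-1` vanish,
then each `g i` is constant. -/
lemma key_const {K : Type*} [Field K] {N : ℕ} (hNp : N.Prime) {ζ : K}
    (hζ : IsPrimitiveRoot ζ N) (hNK : ((N : ℕ) : K) ≠ 0) {r : ℕ} (hrN : r ≤ N)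
    (g : Fin r → ZMod N → K)
    (H : ∀ x y : ZMod N, ∑ i : Fin r, g i (y - ((i : ℕ) : ZMod N) * x) = 0) :
    ∀ (i : Fin r) (u : ZMod N), g i u = g i 0 := by
  haveI : Fact N.Prime := ⟨hNp⟩
  haveI : NeZero N := ⟨hNp.ne_zero⟩
  have h1 : ζ ^ N = 1 := hζ.pow_eq_one
  -- Fourier transform
  set G : Fin r → ZMod N → K := fun i t => ∑ u : ZMod N, E ζ (t * u) * g i u with hG
  -- Step 1 : G i t = 0 for t ≠ 0
  have step1 : ∀ (t : ZMod N), t ≠ 0 → ∀ i₀ : Fin r, G i₀ t = 0 := by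
    intro t ht i₀
    set s : ZMod N := -(t * ((i₀ : ℕ) : ZMod N)) with hs
    have hT : ∑ x : ZMod N, ∑ y : ZMod N,
        E ζ (s * x) * E ζ (t * y) * (∑ i : Fin r, g i (y - ((i : ℕ) : ZMod N) * x)) = 0 := by
      refine Finset.sum_eq_zero fun x _ => Finset.sum_eq_zero fun y _ => ?_
      rw [H x y, mul_zero]
    have inner : ∀ (i : Fin r) (x : ZMod N),
        ∑ y : ZMod N, E ζ (s * x) * E ζ (t * y) * g i (y - ((i : ℕ) : ZMod N) * x)
          = G i t * E ζ ((s + t * ((i : ℕ) : ZMod N)) * x) := by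
      intro i x
      rw [hG]
      rw [Finset.sum_mul]
      refine Fintype.sum_equiv (Equiv.subRight (((i : ℕ) : ZMod N) * x)) _ _ fun y => ?_
      simp only [Equiv.subRight_apply]
      have e2 : E ζ (s * x) * E ζ (t * y)
          = E ζ (t * (y - ((i : ℕ) : ZMod N) * x)) * E ζ ((s + t * ((i : ℕ) : ZMod N)) * x) := by
        rw [← E_add h1, ← E_add h1]
        congr 1
        rw [hs]; ring
      rw [e2]
      ring
    have hswap : ∑ x : ZMod N, ∑ y : ZMod N,
        E ζ (s * x) * E ζ (t * y) * (∑ i : Fin r, g i (y - ((i : ℕ) : ZMod N) * x))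
        = ∑ i : Fin r, G i t * ∑ x : ZMod N, E ζ ((s + t * ((i : ℕ) : ZMod N)) * x) := by
      calc ∑ x : ZMod N, ∑ y : ZMod N,
            E ζ (s * x) * E ζ (t * y) * (∑ i : Fin r, g i (y - ((i : ℕ) : ZMod N) * x))
          = ∑ x : ZMod N, ∑ i : Fin r, ∑ y : ZMod N,
            E ζ (s * x) * E ζ (t * y) * g i (y - ((i : ℕ) : ZMod N) * x) := by
            refine Finset.sum_congr rfl fun x _ => ?_
            rw [← Finset.sum_comm]
            exact Finset.sum_congr rfl fun y _ => Finset.mul_sum _ _ _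
        _ = ∑ i : Fin r, ∑ x : ZMod N, ∑ y : ZMod N,
            E ζ (s * x) * E ζ (t * y) * g i (y - ((i : ℕ) : ZMod N) * x) := Finset.sum_comm
        _ = ∑ i : Fin r, G i t * ∑ x : ZMod N, E ζ ((s + t * ((i : ℕ) : ZMod N)) * x) := by
            refine Finset.sum_congr rfl fun i _ => ?_
            rw [Finset.mul_sum]
            exact Finset.sum_congr rfl fun x _ => inner i x
    rw [hT] at hswap
    have hcollapse : ∀ i : Fin r,
        (∑ x : ZMod N, E ζ ((s + t * ((i : ℕ) : ZMod N)) * x))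
        = if i = i₀ then ((N : ℕ) : K) else 0 := by
      intro i
      rw [E_sum hζ]
      congr 1
      rw [eq_iff_iff]
      constructor
      · intro h
        have h' : t * ((i : ℕ) : ZMod N) = t * ((i₀ : ℕ) : ZMod N) := by
          have := h
          rw [hs] at this
          linear_combination this
        have h'' : ((i : ℕ) : ZMod N) = ((i₀ : ℕ) : ZMod N) := mul_left_cancel₀ ht h'
        have hv : (i : ℕ) = (i₀ : ℕ) := by
          have := congrArg ZMod.val h''
          rwa [ZMod.val_natCast_of_lt (lt_of_lt_of_le i.isLt hrN),
            ZMod.val_natCast_of_lt (lt_of_lt_of_le i₀.isLt hrN)] at this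
        exact Fin.ext hv
      · rintro rfl
        rw [hs]; ring
    rw [Finset.sum_congr rfl (fun i _ => by rw [hcollapse i])] at hswap
    simp only [mul_ite, mul_zero] at hswap
    rw [Finset.sum_ite_eq' Finset.univ i₀ (fun i => G i t * ((N : ℕ) : K)),
      if_pos (Finset.mem_univ _)] at hswap
    have := hswap.symm
    rcases mul_eq_zero.1 this with h | h
    · exact h
    · exact absurd h hNK
  -- Step 2 : inversion
  intro i u
  have inv : ∀ v : ZMod N, ((N : ℕ) : K) * g i v = G i 0 := by
    intro v
    have hsum : ∑ t : ZMod N, E ζ (-(t * v)) * G i t = ((N : ℕ) : K) * g i v := by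
      rw [hG]
      simp only []
      calc ∑ t : ZMod N, E ζ (-(t * v)) * ∑ w : ZMod N, E ζ (t * w) * g i w
          = ∑ t : ZMod N, ∑ w : ZMod N, E ζ (t * (w - v)) * g i w := by
            refine Finset.sum_congr rfl fun t _ => ?_
            rw [Finset.mul_sum]
            refine Finset.sum_congr rfl fun w _ => ?_
            have : t * (w - v) = -(t * v) + t * w := by ring
            rw [this, E_add h1]
            ring
        _ = ∑ w : ZMod N, (∑ t : ZMod N, E ζ ((w - v) * t)) * g i w := by
            rw [Finset.sum_comm]
            refine Finset.sum_congr rfl fun w _ => ?_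
            rw [Finset.sum_mul]
            refine Finset.sum_congr rfl fun t _ => ?_
            rw [mul_comm t (w - v)]
        _ = ∑ w : ZMod N, (if w - v = 0 then ((N : ℕ) : K) else 0) * g i w := by
            refine Finset.sum_congr rfl fun w _ => ?_
            rw [E_sum hζ]
        _ = ((N : ℕ) : K) * g i v := by
            have : ∀ w : ZMod N, (if w - v = 0 then ((N : ℕ) : K) else 0) * g i w
                = if w = v then ((N : ℕ) : K) * g i w else 0 := by
              intro w
              by_cases h : w = v
              · simp [h]
              · rw [if_neg h, if_neg (sub_ne_zero.2 h), zero_mul]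
            rw [Finset.sum_congr rfl fun w _ => this w]
            rw [Finset.sum_ite_eq' Finset.univ v, if_pos (Finset.mem_univ _)]
    have honly : ∑ t : ZMod N, E ζ (-(t * v)) * G i t = G i 0 := by
      rw [Finset.sum_eq_single 0]
      · simp [E_zero]
      · intro t _ ht
        rw [step1 t ht i, mul_zero]
      · intro h; exact absurd (Finset.mem_univ _) h
    rw [honly] at hsum
    exact hsum.symm
  have := (inv u).trans (inv 0).symm
  exact mul_left_cancel₀ hNK this

end Aux

/-- Let `N` be an odd prime, `q` a prime power with `gcd(q, N) = 1` (realized as the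
cardinality of the finite field `F`), and `1 ≤ r ≤ N`.  The Vandermonde-type
`rN × N²` matrix `V(I_N, P_N, …, P_N^{N-1}; r)` over `F`, whose `(i, j)` block is the
circulant permutation matrix `P_N ^ ((i-1)(j-1) mod N)`, has rank `N*r - r + 1`. -/
theorem vandermonde_cpm_rank
    (N : ℕ) (hNp : N.Prime) (hNodd : Odd N)
    (q : ℕ) (F : Type*) [Field F] [Fintype F] (hq : Fintype.card F = q)
    (hcop : Nat.Coprime q N)
    (r : ℕ) (hr : 1 ≤ r) (hrN : r ≤ N) :
    (Matrix.of fun (p : Fin r × Fin N) (c : Fin N × Fin N) =>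
      cpm F N ((p.1 : ℕ) * (c.1 : ℕ)) p.2 c.2).rank = N * r - r + 1 := by
  haveI : Fact N.Prime := ⟨hNp⟩
  haveI : NeZero N := ⟨hNp.ne_zero⟩
  set M : Matrix (Fin r × Fin N) (Fin N × Fin N) F :=
    Matrix.of fun (p : Fin r × Fin N) (c : Fin N × Fin N) =>
      cpm F N ((p.1 : ℕ) * (c.1 : ℕ)) p.2 c.2 with hM
  -- (N : F) ≠ 0
  have hNF : ((N : ℕ) : F) ≠ 0 := by
    intro h
    set p := ringChar F with hp
    haveI : CharP F p := ringChar.charP F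
    obtain ⟨n, hpp, hcard⟩ := FiniteField.card F p
    have hdvdN : p ∣ N := (CharP.cast_eq_zero_iff F p N).1 h
    have hdvdq : p ∣ q := by
      rw [← hq, hcard]
      exact dvd_pow_self p n.pos.ne'
    have : p ∣ 1 := hcop ▸ Nat.dvd_gcd hdvdq hdvdN
    exact hpp.one_lt.ne' (Nat.dvd_one.1 this)
  haveI : NeZero ((N : ℕ) : F) := ⟨hNF⟩
  -- the cyclotomic field
  set Npos : ℕ+ := ⟨N, hNp.pos⟩ with hNpos
  haveI : NeZero (((Npos : ℕ) : F)) := ⟨hNF⟩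
  set K := CyclotomicField Npos F with hK
  have hζ : IsPrimitiveRoot (IsCyclotomicExtension.zeta Npos F K) N :=
    IsCyclotomicExtension.zeta_spec Npos F K
  set ζ : K := IsCyclotomicExtension.zeta Npos F K with hzeta
  have hNK : ((N : ℕ) : K) ≠ 0 := by
    intro h
    apply hNF
    apply (algebraMap F K).injective
    rw [map_natCast, map_zero, h]
  set φ : Fin N ≃ ZMod N := finZmodEquiv N with hφ
  -- characterize the kernel of M.transpose
  have mem_ker_iff : ∀ c : Fin r × Fin N → F,
      c ∈ LinearMap.ker (M.transpose.mulVecLin) ↔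
        ∀ x y : ZMod N, ∑ i : Fin r, c (i, φ.symm (y - ((i : ℕ) : ZMod N) * x)) = 0 := by
    intro c
    rw [LinearMap.mem_ker, Matrix.mulVecLin_apply]
    constructor
    · intro h x y
      have hx := congrFun h (φ.symm x, φ.symm y)
      rw [Matrix.mulVec, Pi.zero_apply] at hx
      rw [← hx]
      rw [dotProduct]
      rw [Fintype.sum_prod_type]
      refine Finset.sum_congr rfl fun i _ => ?_
      have : ∀ a : Fin N, M.transpose (φ.symm x, φ.symm y) (i, a) * c (i, a)
          = if a = φ.symm (y - ((i : ℕ) : ZMod N) * x) then c (i, a) else 0 := by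
        intro a
        rw [Matrix.transpose_apply, hM]
        simp only [Matrix.of_apply, cpm, Nat.cast_mul]
        have hxx : ((((φ.symm x) : Fin N) : ℕ) : ZMod N) = x := φ.apply_symm_apply x
        have hyy : ((((φ.symm y) : Fin N) : ℕ) : ZMod N) = y := φ.apply_symm_apply y
        rw [hxx, hyy]
        have hcond : (y = ((a : ℕ) : ZMod N) + ((i : ℕ) : ZMod N) * x)
            ↔ a = φ.symm (y - ((i : ℕ) : ZMod N) * x) := by
          rw [← φ.apply_eq_iff_eq_symm_apply]
          constructor
          · intro hh; rw [hφ]; show ((a : ℕ) : ZMod N) = _ ; rw [hh]; ring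
          · intro hh
            have : ((a : ℕ) : ZMod N) = y - ((i : ℕ) : ZMod N) * x := hh
            rw [this]; ring
        by_cases hc : y = ((a : ℕ) : ZMod N) + ((i : ℕ) : ZMod N) * x
        · rw [if_pos hc, if_pos (hcond.1 hc), one_mul]
        · rw [if_neg hc, if_neg (fun hh => hc (hcond.2 hh)), zero_mul]
      rw [Finset.sum_congr rfl fun a _ => this a]
      rw [Finset.sum_ite_eq' Finset.univ _ (fun a => c (i, a)), if_pos (Finset.mem_univ _)]
    · intro h
      funext col
      obtain ⟨j, b⟩ := col
      rw [Matrix.mulVec, Pi.zero_apply, dotProduct, Fintype.sum_prod_type]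
      have hmain := h ((j : ℕ) : ZMod N) ((b : ℕ) : ZMod N)
      rw [← hmain]
      refine Finset.sum_congr rfl fun i _ => ?_
      have : ∀ a : Fin N, M.transpose (j, b) (i, a) * c (i, a)
          = if a = φ.symm (((b : ℕ) : ZMod N) - ((i : ℕ) : ZMod N) * ((j : ℕ) : ZMod N))
            then c (i, a) else 0 := by
        intro a
        rw [Matrix.transpose_apply, hM]
        simp only [Matrix.of_apply, cpm, Nat.cast_mul]
        have hcond : (((b : ℕ) : ZMod N) = ((a : ℕ) : ZMod N) + ((i : ℕ) : ZMod N) * ((j : ℕ) : ZMod N))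
            ↔ a = φ.symm (((b : ℕ) : ZMod N) - ((i : ℕ) : ZMod N) * ((j : ℕ) : ZMod N)) := by
          rw [← φ.apply_eq_iff_eq_symm_apply]
          constructor
          · intro hh; show ((a : ℕ) : ZMod N) = _ ; rw [hh]; ring
          · intro hh
            have : ((a : ℕ) : ZMod N) = ((b : ℕ) : ZMod N) - ((i : ℕ) : ZMod N) * ((j : ℕ) : ZMod N) := hh
            rw [this]; ring
        by_cases hc : ((b : ℕ) : ZMod N) = ((a : ℕ) : ZMod N) + ((i : ℕ) : ZMod N) * ((j : ℕ) : ZMod N)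
        · rw [if_pos hc, if_pos (hcond.1 hc), one_mul]
        · rw [if_neg hc, if_neg (fun hh => hc (hcond.2 hh)), zero_mul]
      rw [Finset.sum_congr rfl fun a _ => this a]
      rw [Finset.sum_ite_eq' Finset.univ _ (fun a => c (i, a)), if_pos (Finset.mem_univ _)]
  -- the constant-embedding linear map
  set Φ : (Fin r → F) →ₗ[F] (Fin r × Fin N → F) :=
    { toFun := fun d => fun p => d p.1
      map_add' := fun d₁ d₂ => rfl
      map_smul' := fun m d => rfl } with hΦ
  have hΦinj : Function.Injective Φ := by
    intro d₁ d₂ h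
    funext i
    exact congrFun h (i, φ.symm 0)
  -- the sum functional
  set L : (Fin r → F) →ₗ[F] F :=
    { toFun := fun d => ∑ i : Fin r, d i
      map_add' := fun d₁ d₂ => by simp [Finset.sum_add_distrib]
      map_smul' := fun m d => by simp [Finset.mul_sum] } with hL
  -- kernel = image of constants with zero sum
  have hker : LinearMap.ker (M.transpose.mulVecLin) = Submodule.map Φ (LinearMap.ker L) := by
    ext c
    rw [mem_ker_iff c, Submodule.mem_map]
    constructor
    · intro h
      -- use key_const over K
      have hconst : ∀ (i : Fin r) (u : ZMod N),
          c (i, φ.symm u) = c (i, φ.symm 0) := by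
        intro i u
        have := key_const hNp hζ hNK hrN
          (fun i z => algebraMap F K (c (i, φ.symm z)))
          (fun x y => by
            rw [← map_sum, h x y, map_zero]) i u
        exact (algebraMap F K).injective this
      refine ⟨fun i => c (i, φ.symm 0), ?_, ?_⟩
      · rw [LinearMap.mem_ker, hL]
        have h00 := h 0 0
        simp only [mul_zero, sub_zero] at h00
        exact h00
      · funext p
        obtain ⟨i, a⟩ := p
        show c (i, φ.symm 0) = c (i, a)
        have := hconst i (φ a)
        rw [φ.symm_apply_apply] at this
        exact this.symm
    · rintro ⟨d, hd, rfl⟩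
      intro x y
      rw [LinearMap.mem_ker, hL] at hd
      exact hd
  -- dimension counts
  have hkerL : Module.finrank F (LinearMap.ker L) = r - 1 := by
    have hsurj : Function.Surjective L := by
      intro a
      refine ⟨Pi.single ⟨0, hr⟩ a, ?_⟩
      show ∑ i : Fin r, Pi.single (⟨0, hr⟩ : Fin r) a i = a
      rw [Finset.sum_pi_single', if_pos (Finset.mem_univ _)]
    have hrange : LinearMap.range L = ⊤ := LinearMap.range_eq_top.2 hsurj
    have hdim := LinearMap.finrank_range_add_finrank_ker L
    rw [hrange] at hdim
    rw [Module.finrank_fintype_fun_eq_card] at hdim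
    simp only [finrank_top, Module.finrank_self, Fintype.card_fin] at hdim
    omega
  have hkerM : Module.finrank F (LinearMap.ker (M.transpose.mulVecLin)) = r - 1 := by
    rw [hker]
    rw [← hkerL]
    exact (LinearEquiv.finrank_eq
      (Submodule.equivMapOfInjective Φ hΦinj (LinearMap.ker L))).symm
  -- conclude
  have hdim := LinearMap.finrank_range_add_finrank_ker (M.transpose.mulVecLin)
  have hrankT : M.transpose.rank = Module.finrank F (LinearMap.range M.transpose.mulVecLin) := rfl
  rw [Module.finrank_fintype_fun_eq_card, hkerM] at hdim
  simp only [Fintype.card_prod, Fintype.card_fin] at hdim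
  have hrank : M.rank = M.transpose.rank := (Matrix.rank_transpose M).symm
  have hfin : M.rank + (r - 1) = r * N := by rw [hrank, hrankT]; exact hdim
  have hrle : r ≤ r * N := Nat.le_mul_of_pos_right r hNp.pos
  have hNr : N * r = r * N := Nat.mul_comm N r
  omega
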